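/- If H is a connected graph of order n and G = (H ∘ K_1) ∘ K_1, then th_pd×(G) = 2n = |V(G)|/2. -/

import Mathlib

open SimpleGraph Set

variable {V : Type*} {W : Type*}

/-- The closed neighborhood of a set `S`. -/
def closedNbhdSet (G : SimpleGraph V) (S : Set V) : Set V :=
  S ∪ {w | ∃ u ∈ S, G.Adj u w}

/-- One round of the zero forcing propagation step. -/
def pdStep (G : SimpleGraph V) (A : Set V) : Set V :=
  A ∪ {w | ∃ u ∈ A, G.neighborSet u \ A = {w}}

/-- `obs G S k` is the set `P^[k](S)` of vertices observed after round `k`. -/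
def obs (G : SimpleGraph V) (S : Set V) : ℕ → Set V
  | 0 => S
  | 1 => closedNbhdSet G S
  | (n + 2) => pdStep G (obs G S (n + 1))

/-- `S` is a power dominating set. -/
def IsPDS (G : SimpleGraph V) (S : Set V) : Prop :=
  ∃ t, obs G S t = Set.univ

/-- The power propagation time `pt_pd(G;S)`: least positive `t` with `P^[t](S) = V(G)`. -/
noncomputable def ptpd (G : SimpleGraph V) (S : Set V) : ℕ :=
  sInf {t | 1 ≤ t ∧ obs G S t = Set.univ}

/-- `S` is a dominating set. -/
def IsDomSet (G : SimpleGraph V) (S : Set V) : Prop :=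
  closedNbhdSet G S = Set.univ

/-- The domination number `γ(G)`. -/
noncomputable def gamma (G : SimpleGraph V) : ℕ :=
  sInf {k | ∃ S : Set V, IsDomSet G S ∧ S.ncard = k}

/-- The power domination number `γ_P(G)`. -/
noncomputable def gammaP (G : SimpleGraph V) : ℕ :=
  sInf {k | ∃ S : Set V, IsPDS G S ∧ S.ncard = k}

/-- The product power throttling number `th_pd^×(G)`. -/
noncomputable def thpd (G : SimpleGraph V) : ℕ :=
  sInf {m | ∃ S : Set V, IsPDS G S ∧ m = S.ncard * ptpd G S}

/-- The power propagation time of `G`: minimum over minimum power dominating sets. -/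
noncomputable def ptG (G : SimpleGraph V) : ℕ :=
  sInf {t | ∃ S : Set V, IsPDS G S ∧ S.ncard = gammaP G ∧ t = ptpd G S}

/-- `newObs G S k` is `P^(k)(S)`, the set of vertices first observed in round `k`. -/
def newObs (G : SimpleGraph V) (S : Set V) : ℕ → Set V
  | 0 => S
  | (k + 1) => obs G S (k + 1) \ obs G S k

/-- `rd G S v` is the round in which `v` is first observed. -/
noncomputable def rd (G : SimpleGraph V) (S : Set V) (v : V) : ℕ :=
  sInf {k | v ∈ obs G S k}

/-- The corona `H ∘ K_1`: append one leaf to each vertex of `H`. -/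
def corona (H : SimpleGraph V) : SimpleGraph (V ⊕ V) where
  Adj x y :=
    match x, y with
    | Sum.inl u, Sum.inl v => H.Adj u v
    | Sum.inl u, Sum.inr v => u = v
    | Sum.inr u, Sum.inl v => u = v
    | Sum.inr _, Sum.inr _ => False
  symm := by
    constructor
    rintro (u | u) (v | v) h
    · exact h.symm
    · exact h.symm
    · exact h.symm
    · exact h
  loopless := by
    constructor
    rintro (u | u) h
    · exact (H.ne_of_adj h) rfl
    · exact h

section Aux

variable {V : Type*}

lemma obs_succ_univ (G : SimpleGraph V) (S : Set V) (t : ℕ) (h : obs G S t = Set.univ) :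
    obs G S (t + 1) = Set.univ := by
  cases t with
  | zero =>
    have hS : S = Set.univ := h
    show obs G S 1 = Set.univ
    simp only [obs, closedNbhdSet, hS, Set.univ_union]
  | succ n =>
    show obs G S (n + 2) = Set.univ
    simp only [obs, pdStep, h, Set.univ_union]

lemma pds_spec (G : SimpleGraph V) (S : Set V) (h : IsPDS G S) :
    1 ≤ ptpd G S ∧ obs G S (ptpd G S) = Set.univ := by
  have hne : {t | 1 ≤ t ∧ obs G S t = Set.univ}.Nonempty := by
    obtain ⟨t, ht⟩ := h
    exact ⟨t + 1, Nat.le_add_left 1 t, obs_succ_univ G S t ht⟩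
  exact Nat.sInf_mem hne

lemma card_le_ncard_of_proj {α β : Type*} [Finite α] [Fintype β] (p : α → β) (S : Set α)
    (h : ∀ b, ∃ x ∈ S, p x = b) : Fintype.card β ≤ S.ncard := by
  choose f hf hpf using h
  have hinj : Function.Injective f := fun x y hxy => by rw [← hpf x, ← hpf y, hxy]
  calc Fintype.card β = Nat.card β := Nat.card_eq_fintype_card.symm
    _ = Nat.card (Set.range f) := (Nat.card_range_of_injective hinj).symm
    _ = (Set.range f).ncard := Nat.card_coe_set_eq _
    _ ≤ S.ncard := Set.ncard_le_ncard (Set.range_subset_iff.2 hf) (Set.toFinite S)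

lemma corona_adj_ll (K : SimpleGraph V) (u v : V) :
    (corona K).Adj (Sum.inl u) (Sum.inl v) ↔ K.Adj u v := Iff.rfl

lemma corona_adj_lr (K : SimpleGraph V) (u v : V) :
    (corona K).Adj (Sum.inl u) (Sum.inr v) ↔ u = v := Iff.rfl

lemma corona_adj_rl (K : SimpleGraph V) (u v : V) :
    (corona K).Adj (Sum.inr u) (Sum.inl v) ↔ u = v := Iff.rfl

lemma corona_adj_rr (K : SimpleGraph V) (u v : V) :
    ¬ (corona K).Adj (Sum.inr u) (Sum.inr v) := fun h => h

/-- Projection of the double-corona vertex set onto the corona vertex set. -/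
def proj4 {V : Type*} : (V ⊕ V) ⊕ (V ⊕ V) → V ⊕ V
  | Sum.inl (Sum.inl v) => Sum.inl v
  | Sum.inl (Sum.inr v) => Sum.inr v
  | Sum.inr (Sum.inl v) => Sum.inl v
  | Sum.inr (Sum.inr v) => Sum.inr v

lemma inv_lemma (H : SimpleGraph V) (S : Set ((V ⊕ V) ⊕ (V ⊕ V))) (v : V)
    (ha : Sum.inl (Sum.inl v) ∉ S) (hb : Sum.inr (Sum.inl v) ∉ S)
    (hc : Sum.inl (Sum.inr v) ∉ S) (hd : Sum.inr (Sum.inr v) ∉ S) :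
    ∀ k, Sum.inr (Sum.inl v) ∉ obs (corona (corona H)) S k ∧
         Sum.inl (Sum.inr v) ∉ obs (corona (corona H)) S k ∧
         Sum.inr (Sum.inr v) ∉ obs (corona (corona H)) S k := by
  set G := corona (corona H) with hG
  intro k
  induction k with
  | zero => exact ⟨hb, hc, hd⟩
  | succ n ih =>
    cases n with
    | zero =>
      have key : ∀ x : (V ⊕ V) ⊕ (V ⊕ V), x ∉ S →
          (∀ u ∈ S, ¬ G.Adj u x) → x ∉ closedNbhdSet G S := by
        intro x hx hadj h
        simp only [closedNbhdSet, Set.mem_union, Set.mem_setOf_eq] at h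
        rcases h with h | ⟨u, hu, hux⟩
        · exact hx h
        · exact hadj u hu hux
      refine ⟨key _ hb ?_, key _ hc ?_, key _ hd ?_⟩
      · rintro (x | x) hu hadj
        · have hx : x = Sum.inl v := hadj
          subst hx; exact ha hu
        · exact hadj
      · rintro (x | x) hu hadj
        · rcases x with w | w
          · have hw : w = v := hadj
            subst hw; exact ha hu
          · exact hadj
        · have hx : x = Sum.inr v := hadj
          subst hx; exact hd hu
      · rintro (x | x) hu hadj
        · have hx : x = Sum.inr v := hadj
          subst hx; exact hc hu
        · exact hadj
    | succ m =>
      obtain ⟨ihb, ihc, ihd⟩ := ih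
      set A := obs G S (m + 1) with hA
      have hstep : obs G S (m + 1 + 1) = pdStep G A := rfl
      rw [hstep]
      have memstep : ∀ x : (V ⊕ V) ⊕ (V ⊕ V), x ∈ pdStep G A →
          x ∈ A ∨ ∃ u ∈ A, G.neighborSet u \ A = {x} := by
        intro x h
        simpa only [pdStep, Set.mem_union, Set.mem_setOf_eq] using h
      refine ⟨?_, ?_, ?_⟩
      · intro h
        rcases memstep _ h with h | ⟨u, hu, heq⟩
        · exact ihb h
        · have hmem : Sum.inr (Sum.inl v) ∈ G.neighborSet u \ A := by
            rw [heq]; exact rfl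
          have hadj : G.Adj u (Sum.inr (Sum.inl v)) := hmem.1
          rcases u with x | x
          · have hx : x = Sum.inl v := hadj
            subst hx
            have hcmem : Sum.inl (Sum.inr v) ∈ G.neighborSet (Sum.inl (Sum.inl v)) \ A := by
              refine ⟨?_, ihc⟩
              show G.Adj (Sum.inl (Sum.inl v)) (Sum.inl (Sum.inr v))
              exact rfl
            rw [heq] at hcmem
            simp at hcmem
          · exact hadj
      · intro h
        rcases memstep _ h with h | ⟨u, hu, heq⟩
        · exact ihc h
        · have hmem : Sum.inl (Sum.inr v) ∈ G.neighborSet u \ A := by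
            rw [heq]; exact rfl
          have hadj : G.Adj u (Sum.inl (Sum.inr v)) := hmem.1
          rcases u with x | x
          · rcases x with w | w
            · have hw : w = v := hadj
              rw [hw] at heq
              have hbmem : Sum.inr (Sum.inl v) ∈ G.neighborSet (Sum.inl (Sum.inl v)) \ A := by
                refine ⟨?_, ihb⟩
                show G.Adj (Sum.inl (Sum.inl v)) (Sum.inr (Sum.inl v))
                exact rfl
              rw [heq] at hbmem
              simp at hbmem
            · exact hadj
          · have hx : x = Sum.inr v := hadj
            subst hx
            exact ihd hu
      · intro h
        rcases memstep _ h with h | ⟨u, hu, heq⟩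
        · exact ihd h
        · have hmem : Sum.inr (Sum.inr v) ∈ G.neighborSet u \ A := by
            rw [heq]; exact rfl
          have hadj : G.Adj u (Sum.inr (Sum.inr v)) := hmem.1
          rcases u with x | x
          · have hx : x = Sum.inr v := hadj
            subst hx
            exact ihc hu
          · exact hadj

end Aux

theorem stmt14 [Fintype V] (H : SimpleGraph V) (hH : H.Connected) :
    thpd (corona (corona H)) = 2 * Fintype.card V ∧
      2 * thpd (corona (corona H)) = Fintype.card ((V ⊕ V) ⊕ (V ⊕ V)) := by
  classical
  have hV : Nonempty V := hH.nonempty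
  set G := corona (corona H) with hGdef
  set S₀ : Set ((V ⊕ V) ⊕ (V ⊕ V)) := Set.range (fun v : V => Sum.inl (Sum.inl v)) with hS₀
  have hinj : Function.Injective (fun v : V => (Sum.inl (Sum.inl v) : (V ⊕ V) ⊕ (V ⊕ V))) := by
    intro a b h
    simpa using h
  have hncard : S₀.ncard = Fintype.card V := by
    rw [hS₀, ← Nat.card_coe_set_eq, Nat.card_range_of_injective hinj,
      Nat.card_eq_fintype_card]
  have hd_not1 : ∀ v : V, Sum.inr (Sum.inr v) ∉ obs G S₀ 1 := by
    intro v h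
    simp only [obs, closedNbhdSet, Set.mem_union, Set.mem_setOf_eq] at h
    rcases h with h | ⟨u, hu, hadj⟩
    · obtain ⟨w, hw⟩ := h
      exact Sum.inl_ne_inr hw
    · obtain ⟨w, hw⟩ := hu
      rw [← hw] at hadj
      exact Sum.inl_ne_inr (show (Sum.inl w : V ⊕ V) = Sum.inr v from hadj)
  have hin1 : ∀ x : (V ⊕ V) ⊕ (V ⊕ V), (∀ v : V, x ≠ Sum.inr (Sum.inr v)) →
      x ∈ obs G S₀ 1 := by
    intro x hx
    show x ∈ closedNbhdSet G S₀
    simp only [closedNbhdSet, Set.mem_union, Set.mem_setOf_eq]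
    rcases x with (v | v) | (v | v)
    · exact Or.inl ⟨v, rfl⟩
    · refine Or.inr ⟨Sum.inl (Sum.inl v), ⟨v, rfl⟩, ?_⟩
      show (corona H).Adj (Sum.inl v) (Sum.inr v)
      rfl
    · refine Or.inr ⟨Sum.inl (Sum.inl v), ⟨v, rfl⟩, ?_⟩
      show (Sum.inl v : V ⊕ V) = Sum.inl v
      rfl
    · exact absurd rfl (hx v)
  have hobs2 : obs G S₀ 2 = Set.univ := by
    rw [Set.eq_univ_iff_forall]
    intro x
    show x ∈ pdStep G (obs G S₀ 1)
    simp only [pdStep, Set.mem_union, Set.mem_setOf_eq]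
    by_cases hx : ∀ v : V, x ≠ Sum.inr (Sum.inr v)
    · exact Or.inl (hin1 x hx)
    · push_neg at hx
      obtain ⟨v, rfl⟩ := hx
      refine Or.inr ⟨Sum.inl (Sum.inr v), hin1 _ (fun w h => Sum.inl_ne_inr h), ?_⟩
      ext y
      simp only [Set.mem_diff, SimpleGraph.mem_neighborSet, Set.mem_singleton_iff]
      constructor
      · rintro ⟨hadj, hny⟩
        rcases y with (w | w) | (w | w)
        · exfalso
          have hw2 : v = w := hadj
          subst hw2
          exact hny (hin1 _ (fun z h => Sum.inl_ne_inr h))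
        · exact (corona_adj_rr H v w (hadj : (corona H).Adj (Sum.inr v) (Sum.inr w))).elim
        · exact (Sum.inr_ne_inl (show (Sum.inr v : V ⊕ V) = Sum.inl w from hadj)).elim
        · have hvw : v = w := Sum.inr.inj (show (Sum.inr v : V ⊕ V) = Sum.inr w from hadj)
          subst hvw
          rfl
      · rintro rfl
        refine ⟨?_, hd_not1 v⟩
        show (Sum.inr v : V ⊕ V) = Sum.inr v
        rfl
  have hPDS₀ : IsPDS G S₀ := ⟨2, hobs2⟩
  have hpt₀ : ptpd G S₀ = 2 := by
    have h2 : 2 ∈ {t | 1 ≤ t ∧ obs G S₀ t = Set.univ} := ⟨one_le_two, hobs2⟩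
    refine le_antisymm (Nat.sInf_le h2) (le_csInf ⟨2, h2⟩ ?_)
    rintro m ⟨hm1, hm2⟩
    by_contra hlt
    push_neg at hlt
    interval_cases m
    obtain ⟨v⟩ := hV
    have hnm := hd_not1 v
    rw [hm2] at hnm
    exact hnm (Set.mem_univ _)
  have hits : ∀ S : Set ((V ⊕ V) ⊕ (V ⊕ V)), IsPDS G S →
      ∀ v : V, ∃ x ∈ S, Sum.elim id id (proj4 x) = v := by
    intro S hS v
    by_contra hcon
    push_neg at hcon
    have ha : Sum.inl (Sum.inl v) ∉ S := fun hm => hcon _ hm rfl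
    have hb : Sum.inr (Sum.inl v) ∉ S := fun hm => hcon _ hm rfl
    have hc : Sum.inl (Sum.inr v) ∉ S := fun hm => hcon _ hm rfl
    have hd : Sum.inr (Sum.inr v) ∉ S := fun hm => hcon _ hm rfl
    obtain ⟨t, ht⟩ := hS
    have hdead := (inv_lemma H S v ha hb hc hd t).2.2
    rw [← hGdef] at hdead
    rw [ht] at hdead
    exact hdead (Set.mem_univ _)
  have hsize1 : ∀ S : Set ((V ⊕ V) ⊕ (V ⊕ V)), IsPDS G S → Fintype.card V ≤ S.ncard :=
    fun S hS => card_le_ncard_of_proj (fun x => Sum.elim id id (proj4 x)) S (hits S hS)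
  have hsize2 : ∀ S : Set ((V ⊕ V) ⊕ (V ⊕ V)), obs G S 1 = Set.univ →
      2 * Fintype.card V ≤ S.ncard := by
    intro S hS
    have h : ∀ w : V ⊕ V, ∃ x ∈ S, proj4 x = w := by
      intro w
      have huniv : ∀ x, x ∈ closedNbhdSet G S := by
        rw [show closedNbhdSet G S = obs G S 1 from rfl, hS]
        exact fun x => Set.mem_univ x
      rcases w with v | v
      · have hx := huniv (Sum.inr (Sum.inl v))
        simp only [closedNbhdSet, Set.mem_union, Set.mem_setOf_eq] at hx
        rcases hx with hx | ⟨u, hu, hadj⟩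
        · exact ⟨_, hx, rfl⟩
        · rcases u with x | x
          · have hxx : x = Sum.inl v := hadj
            subst hxx
            exact ⟨_, hu, rfl⟩
          · exact (hadj : False).elim
      · have hx := huniv (Sum.inr (Sum.inr v))
        simp only [closedNbhdSet, Set.mem_union, Set.mem_setOf_eq] at hx
        rcases hx with hx | ⟨u, hu, hadj⟩
        · exact ⟨_, hx, rfl⟩
        · rcases u with x | x
          · have hxx : x = Sum.inr v := hadj
            subst hxx
            exact ⟨_, hu, rfl⟩
          · exact (hadj : False).elim
    have hcard := card_le_ncard_of_proj proj4 S h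
    rw [Fintype.card_sum] at hcard
    rw [two_mul]
    exact hcard
  have hmem : Fintype.card V * 2 ∈
      {m | ∃ S, IsPDS G S ∧ m = S.ncard * ptpd G S} := ⟨S₀, hPDS₀, by rw [hncard, hpt₀]⟩
  have hthpd : thpd G = 2 * Fintype.card V := by
    refine le_antisymm ?_ ?_
    · calc thpd G ≤ Fintype.card V * 2 := Nat.sInf_le hmem
        _ = 2 * Fintype.card V := Nat.mul_comm _ _
    · show 2 * Fintype.card V ≤ sInf {m | ∃ S, IsPDS G S ∧ m = S.ncard * ptpd G S}
      refine le_csInf ⟨_, hmem⟩ ?_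
      rintro m ⟨S, hS, rfl⟩
      obtain ⟨hpt1, hptuniv⟩ := pds_spec G S hS
      rcases Nat.lt_or_ge (ptpd G S) 2 with hlt | hge
      · have hpteq : ptpd G S = 1 := by omega
        rw [hpteq] at hptuniv ⊢
        rw [Nat.mul_one]
        exact hsize2 S hptuniv
      · calc 2 * Fintype.card V = Fintype.card V * 2 := Nat.mul_comm _ _
          _ ≤ S.ncard * ptpd G S := Nat.mul_le_mul (hsize1 S hS) hge
  refine ⟨hthpd, ?_⟩
  rw [hthpd]
  simp only [Fintype.card_sum]
  ring
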